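/- arXiv:2211.00346 — 5 statements merged into one kernel-verified Lean document; each statement's English description precedes it below -/
import Mathlib

section
/- Let X = (X_t) be a random field indexed by t ∈ [0,∞)^N with values in ℝ^d on a probability space, such that X_0 = 0 almost surely, for every pair s ≼ t the increment X_t − X_s is independent of X_s, and X_{t+τ} − X_t has the same law as X_τ for all t, τ ∈ [0,∞)^N. Let μ_t denote the law of X_t and let e_1,…,e_N be the canonical basis of ℝ^N. Then for every t = (t_1,…,t_N) ∈ [0,∞)^N one has μ_t = μ_{t_1 e_1} ∗ μ_{t_2 e_2} ∗ ⋯ ∗ μ_{t_N e_N}; equivalently, there exist mutually independent random vectors Y^{(1)},…,Y^{(N)} with Y^{(j)} distributed as X_{t_j e_j} such that Y^{(1)} + ⋯ + Y^{(N)} has the same law as X_t. (Part (ii) of Proposition 2.6.) -/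
open MeasureTheory ProbabilityTheory
open scoped MeasureTheory

section Aux

variable {Ω : Type*} [MeasurableSpace Ω] {P : Measure Ω} [IsProbabilityMeasure P]

/-- The law of the sum of two independent random variables is the convolution of the laws. -/
lemma map_add_of_indep' {E : Type*} [MeasurableSpace E] [AddMonoid E] [MeasurableAdd₂ E]
    {f g : Ω → E} (hf : Measurable f) (hg : Measurable g)
    (h : IndepFun f g P) :
    Measure.map (fun ω => f ω + g ω) P = (Measure.map f P).conv (Measure.map g P) := by
  have hpair : Measure.map (fun ω => (f ω, g ω)) P = (Measure.map f P).prod (Measure.map g P) :=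
    (indepFun_iff_map_prod_eq_prod_map_map hf.aemeasurable hg.aemeasurable).1 h
  rw [Measure.conv, ← hpair,
    Measure.map_map measurable_add (hf.prodMk hg)]
  rfl

/-- The marginal of a product probability measure. -/
lemma pi_map_eval' {ι : Type*} [Fintype ι] [DecidableEq ι] {α : ι → Type*} [∀ i, MeasurableSpace (α i)]
    (μ : ∀ i, Measure (α i)) [∀ i, IsProbabilityMeasure (μ i)] (i : ι) :
    Measure.map (fun x : ∀ j, α j => x i) (Measure.pi μ) = μ i := by
  ext s hs
  rw [Measure.map_apply (measurable_pi_apply i) hs, Set.eval_preimage, Measure.pi_pi]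
  rw [Finset.prod_eq_single i]
  · simp
  · intro j _ hj
    simp [Function.update_of_ne hj]
  · simp

/-- Coordinates of a product probability measure are independent. -/
lemma iIndepFun_eval_pi' {ι : Type*} [Fintype ι] [DecidableEq ι] {α : ι → Type*} [∀ i, MeasurableSpace (α i)]
    (μ : ∀ i, Measure (α i)) [∀ i, IsProbabilityMeasure (μ i)] :
    iIndepFun (fun (i : ι) (x : ∀ j, α j) => x i) (Measure.pi μ) := by
  rw [iIndepFun_iff_measure_inter_preimage_eq_mul]
  intro S sets hsets
  have hset : (⋂ i ∈ S, (fun x : ∀ j, α j => x i) ⁻¹' sets i) =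
      Set.pi Set.univ (fun j => if j ∈ S then sets j else Set.univ) := by
    ext x
    simp only [Set.mem_iInter, Set.mem_preimage, Set.mem_pi, Set.mem_univ, true_implies]
    constructor
    · intro h j
      by_cases hj : j ∈ S
      · simpa [hj] using h j hj
      · simp [hj]
    · intro h i hi
      have := h i
      rwa [if_pos hi] at this
  rw [hset, Measure.pi_pi]
  have heach : ∀ i ∈ S, Measure.pi μ ((fun x : ∀ j, α j => x i) ⁻¹' sets i) = μ i (sets i) := by
    intro i hi
    rw [← pi_map_eval' μ i, Measure.map_apply (measurable_pi_apply i) (hsets i hi)]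
  rw [Finset.prod_congr rfl heach]
  have : ∀ j : ι, μ j (if j ∈ S then sets j else Set.univ) =
      if j ∈ S then μ j (sets j) else 1 := by
    intro j; split <;> simp
  rw [Finset.prod_congr rfl (fun j _ => this j), Finset.prod_ite_mem, Finset.univ_inter]

end Aux

/-- Proposition 2.6 (ii): for a multiparameter Lévy process,
`μ_t = μ_{t₁e₁} ∗ ⋯ ∗ μ_{t_N e_N}`; equivalently there exist mutually independent
random vectors `Y⁽ʲ⁾ ~ X_{t_j e_j}` whose sum is distributed as `X_t`. -/
theorem stmt_1
    {Ω : Type*} [MeasurableSpace Ω] (P : Measure Ω) [IsProbabilityMeasure P]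
    {N d : ℕ}
    (X : (Fin N → ℝ) → Ω → EuclideanSpace ℝ (Fin d))
    (hXmeas : ∀ t, Measurable (X t))
    (hX0 : ∀ᵐ ω ∂P, X 0 ω = 0)
    (hindep : ∀ s t : Fin N → ℝ, (∀ j, 0 ≤ s j) → (∀ j, s j ≤ t j) →
      IndepFun (fun ω => X t ω - X s ω) (X s) P)
    (hstat : ∀ t τ : Fin N → ℝ, (∀ j, 0 ≤ t j) → (∀ j, 0 ≤ τ j) →
      Measure.map (fun ω => X (t + τ) ω - X t ω) P = Measure.map (X τ) P) :
    ∀ t : Fin N → ℝ, (∀ j, 0 ≤ t j) →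
      (Measure.map (X t) P =
        (List.ofFn (fun j : Fin N => Measure.map (X (Pi.single j (t j))) P)).foldr
          (fun m acc => MeasureTheory.Measure.conv m acc) (Measure.dirac (0 : EuclideanSpace ℝ (Fin d)))) ∧
      ∃ (Ω' : Type) (_ : MeasurableSpace Ω') (P' : Measure Ω'),
        IsProbabilityMeasure P' ∧
        ∃ Y : Fin N → Ω' → EuclideanSpace ℝ (Fin d),
          iIndepFun Y P' ∧
          (∀ j, Measure.map (Y j) P' = Measure.map (X (Pi.single j (t j))) P) ∧
          Measure.map (fun ω => ∑ j, Y j ω) P' = Measure.map (X t) P := by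
  intro t ht
  have hE : True := trivial
  set m : Fin N → Measure (EuclideanSpace ℝ (Fin d)) := fun j => Measure.map (X (Pi.single j (t j))) P with hm
  have hmprob : ∀ j, IsProbabilityMeasure (m j) :=
    fun j => Measure.isProbabilityMeasure_map (hXmeas _).aemeasurable
  -- the partial "tails"
  set u : ℕ → (Fin N → ℝ) := fun k j => if k ≤ (j : ℕ) then t j else 0 with hu
  have hu0 : u 0 = t := by funext j; simp [hu]
  have huN : u N = 0 := by
    funext j
    simp [hu, Nat.not_le.2 j.isLt]
  have hu_nonneg : ∀ k j, 0 ≤ u k j := by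
    intro k j; simp only [hu]; split
    · exact ht j
    · exact le_refl 0
  have hu_mono : ∀ k j, u (k + 1) j ≤ u k j := by
    intro k j; simp only [hu]; split
    · rw [if_pos (Nat.le_of_succ_le ‹_›)]
    · split
      · exact ht j
      · exact le_refl 0
  have hu_step : ∀ (k : ℕ) (hk : k < N),
      u k = u (k + 1) + Pi.single (⟨k, hk⟩ : Fin N) (t ⟨k, hk⟩) := by
    intro k hk
    funext j
    by_cases hj : j = (⟨k, hk⟩ : Fin N)
    · subst hj
      simp [hu, Pi.single_eq_same]
    · have hj' : (j : ℕ) ≠ k := fun h => hj (Fin.ext h)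
      have : (k ≤ (j : ℕ)) ↔ (k + 1 ≤ (j : ℕ)) := by omega
      simp [hu, Pi.single_eq_of_ne hj, this]
  -- laws are probability measures
  have hprob : ∀ s : Fin N → ℝ, IsProbabilityMeasure (Measure.map (X s) P) :=
    fun s => Measure.isProbabilityMeasure_map (hXmeas _).aemeasurable
  -- key induction
  have key : ∀ n k, k + n = N →
      Measure.map (X (u k)) P =
        ((List.ofFn m).drop k).foldr (fun a b => a.conv b) (Measure.dirac (0 : (EuclideanSpace ℝ (Fin d)))) := by
    intro n
    induction n with
    | zero =>
      intro k hk
      have hkN : k = N := by omega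
      rw [List.drop_of_length_le (by simp [hkN]), List.foldr_nil, hkN, huN]
      have : Measure.map (X 0) P = Measure.map (fun _ : Ω => (0 : (EuclideanSpace ℝ (Fin d)))) P :=
        Measure.map_congr hX0
      rw [this, Measure.map_const, measure_univ, one_smul]
    | succ n ih =>
      intro k hk
      have hkN : k < N := by omega
      set jk : Fin N := ⟨k, hkN⟩ with hjk
      have hdec := hu_step k hkN
      -- increment law
      have hincr : Measure.map (fun ω => X (u k) ω - X (u (k + 1)) ω) P = m jk := by
        have := hstat (u (k + 1)) (Pi.single jk (t jk)) (hu_nonneg (k + 1))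
          (fun j => by
            by_cases hj : j = jk
            · subst hj; rw [Pi.single_eq_same]; exact ht jk
            · rw [Pi.single_eq_of_ne hj])
        rw [← hdec] at this
        exact this
      have hind : IndepFun (fun ω => X (u k) ω - X (u (k+1)) ω) (X (u (k+1))) P :=
        hindep (u (k + 1)) (u k) (hu_nonneg (k + 1)) (hu_mono k)
      have hsum : Measure.map (X (u k)) P =
          Measure.map (fun ω => (X (u k) ω - X (u (k+1)) ω) + X (u (k+1)) ω) P := by
        congr 1
        funext ω
        simp
      rw [hsum, map_add_of_indep' (f := fun ω => X (u k) ω - X (u (k+1)) ω) ((hXmeas _).sub (hXmeas _)) (hXmeas _) hind, hincr,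
        ih (k + 1) (by omega)]
      have hdrop : (List.ofFn m).drop k = m jk :: (List.ofFn m).drop (k + 1) := by
        rw [List.drop_eq_getElem_cons (by simpa using hkN)]
        congr 1
        simp [hjk]
      rw [hdrop, List.foldr_cons]
  have part1 : Measure.map (X t) P =
      (List.ofFn m).foldr (fun a b => a.conv b) (Measure.dirac (0 : (EuclideanSpace ℝ (Fin d)))) := by
    have := key N 0 (by omega)
    rwa [hu0, List.drop_zero] at this
  refine ⟨part1, ?_⟩
  -- Part 2: product space construction
  haveI := hmprob
  refine ⟨Fin N → (EuclideanSpace ℝ (Fin d)), inferInstance, Measure.pi m, inferInstance,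
    fun j x => x j, iIndepFun_eval_pi' m, fun j => pi_map_eval' m j, ?_⟩
  -- law of the sum of coordinates
  set S : ℕ → (Fin N → (EuclideanSpace ℝ (Fin d))) → (EuclideanSpace ℝ (Fin d)) :=
    fun k x => ∑ j ∈ Finset.univ.filter (fun j : Fin N => k ≤ (j : ℕ)), x j with hS
  have hSmeas : ∀ k, Measurable (S k) :=
    fun k => Finset.measurable_sum _ (fun j _ => measurable_pi_apply j)
  have keyS : ∀ n k, k + n = N →
      Measure.map (S k) (Measure.pi m) =
        ((List.ofFn m).drop k).foldr (fun a b => a.conv b) (Measure.dirac (0 : (EuclideanSpace ℝ (Fin d)))) := by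
    intro n
    induction n with
    | zero =>
      intro k hk
      have hkN : k = N := by omega
      rw [List.drop_of_length_le (by simp [hkN]), List.foldr_nil]
      have hSN : S k = fun _ => (0 : (EuclideanSpace ℝ (Fin d))) := by
        funext x
        have hemp : Finset.univ.filter (fun j : Fin N => k ≤ (j : ℕ)) = ∅ := by
          apply Finset.filter_false_of_mem
          intro j _
          exact Nat.not_le.2 (hkN ▸ j.isLt)
        simp [hS, hemp]
      rw [hSN, Measure.map_const, measure_univ, one_smul]
    | succ n ih =>
      intro k hk
      have hkN : k < N := by omega
      set jk : Fin N := ⟨k, hkN⟩ with hjk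
      have hfil : Finset.univ.filter (fun j : Fin N => k ≤ (j : ℕ)) =
          insert jk (Finset.univ.filter (fun j : Fin N => k + 1 ≤ (j : ℕ))) := by
        ext j
        simp only [Finset.mem_filter, Finset.mem_univ, true_and, Finset.mem_insert]
        constructor
        · intro hj
          rcases Nat.eq_or_lt_of_le hj with h | h
          · exact Or.inl (Fin.ext h.symm)
          · exact Or.inr h
        · rintro (rfl | hj)
          · exact le_refl k
          · omega
      have hSdec : S k = fun x => x jk + S (k + 1) x := by
        funext x
        rw [hS]
        simp only
        rw [hfil, Finset.sum_insert (by simp [hjk])]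
      have hnotmem : jk ∉ Finset.univ.filter (fun j : Fin N => k + 1 ≤ (j : ℕ)) := by
        simp [hjk]
      have hSfun : S (k + 1) =
          ∑ j ∈ Finset.univ.filter (fun j : Fin N => k + 1 ≤ (j : ℕ)),
            (fun x : Fin N → (EuclideanSpace ℝ (Fin d)) => x j) := by
        funext x
        simp [hS]
      have hindS : IndepFun (fun x : Fin N → (EuclideanSpace ℝ (Fin d)) => x jk) (S (k + 1)) (Measure.pi m) := by
        rw [hSfun]
        exact ((iIndepFun_eval_pi' m).indepFun_finsetSum_of_notMem
          (fun j => measurable_pi_apply j) hnotmem).symm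
      rw [hSdec, map_add_of_indep' (measurable_pi_apply jk) (hSmeas (k + 1)) hindS,
        pi_map_eval' m jk, ih (k + 1) (by omega)]
      have hdrop : (List.ofFn m).drop k = m jk :: (List.ofFn m).drop (k + 1) := by
        rw [List.drop_eq_getElem_cons (by simpa using hkN)]
        congr 1
        simp [hjk]
      rw [hdrop, List.foldr_cons]
  have hS0 : S 0 = fun x => ∑ j, x j := by
    funext x
    have : Finset.univ.filter (fun j : Fin N => 0 ≤ (j : ℕ)) = Finset.univ := by
      apply Finset.filter_true_of_mem; intro j _; exact Nat.zero_le _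
    simp [hS, this]
  have := keyS N 0 (by omega)
  rw [hS0, List.drop_zero] at this
  exact this.trans part1.symm
end

section
/- Let X = (X_t) be a random field indexed by t ∈ [0,∞)^N with values in ℝ^d on a probability space, such that X_0 = 0 almost surely, for every pair s ≼ t the increment X_t − X_s is independent of X_s, and X_{t+τ} − X_t has the same law as X_τ for all t, τ ∈ [0,∞)^N. Let e_1,…,e_N be the canonical basis of ℝ^N. Then for every t = (t_1,…,t_N) ∈ [0,∞)^N and every ξ ∈ ℝ^d, the characteristic function factorizes: E[exp(i⟨ξ, X_t⟩)] = ∏_{j=1}^N E[exp(i⟨ξ, X_{t_j e_j}⟩)]. (Proposition 2.8 on the characteristic function of a multiparameter Lévy process.) -/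
open MeasureTheory ProbabilityTheory
open scoped RealInnerProductSpace

/-- Expectation of a product of functions of independent random variables factorizes. -/
lemma aux_indep_integral_mul {Ω : Type*} [MeasurableSpace Ω] {P : Measure Ω}
    [IsProbabilityMeasure P] {E F : Type*} [TopologicalSpace E] [TopologicalSpace F]
    [SecondCountableTopology E] [SecondCountableTopology F]
    [MeasurableSpace E] [MeasurableSpace F] [BorelSpace E] [BorelSpace F]
    {f : Ω → E} {g : Ω → F} (hf : Measurable f) (hg : Measurable g)
    (h : IndepFun f g P) {φ : E → ℂ} {ψ : F → ℂ}
    (hφ : Continuous φ) (hψ : Continuous ψ) :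
    (∫ ω, φ (f ω) * ψ (g ω) ∂P) = (∫ ω, φ (f ω) ∂P) * ∫ ω, ψ (g ω) ∂P := by
  have hmap := (indepFun_iff_map_prod_eq_prod_map_map hf.aemeasurable hg.aemeasurable).mp h
  have h1 : (∫ ω, φ (f ω) * ψ (g ω) ∂P)
      = ∫ p : E × F, φ p.1 * ψ p.2 ∂(P.map (fun ω => (f ω, g ω))) := by
    rw [integral_map (hf.prodMk hg).aemeasurable]
    exact ((hφ.comp continuous_fst).mul (hψ.comp continuous_snd)).aestronglyMeasurable
  rw [h1, hmap, integral_prod_mul, integral_map hf.aemeasurable hφ.aestronglyMeasurable,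
    integral_map hg.aemeasurable hψ.aestronglyMeasurable]

/-- Proposition 2.8: the characteristic function of a multiparameter Lévy process
factorizes as `E[exp(i⟨ξ, X_t⟩)] = ∏_j E[exp(i⟨ξ, X_{t_j e_j}⟩)]`. -/
theorem stmt_2
    {Ω : Type*} [MeasurableSpace Ω] (P : Measure Ω) [IsProbabilityMeasure P]
    {N d : ℕ}
    (X : (Fin N → ℝ) → Ω → EuclideanSpace ℝ (Fin d))
    (hXmeas : ∀ t, Measurable (X t))
    (hX0 : ∀ᵐ ω ∂P, X 0 ω = 0)
    (hindep : ∀ s t : Fin N → ℝ, (∀ j, 0 ≤ s j) → (∀ j, s j ≤ t j) →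
      IndepFun (fun ω => X t ω - X s ω) (X s) P)
    (hstat : ∀ t τ : Fin N → ℝ, (∀ j, 0 ≤ t j) → (∀ j, 0 ≤ τ j) →
      Measure.map (fun ω => X (t + τ) ω - X t ω) P = Measure.map (X τ) P) :
    ∀ t : Fin N → ℝ, (∀ j, 0 ≤ t j) → ∀ ξ : EuclideanSpace ℝ (Fin d),
      (∫ ω, Complex.exp (Complex.I * (⟪ξ, X t ω⟫ : ℂ)) ∂P) =
        ∏ j, ∫ ω, Complex.exp (Complex.I * (⟪ξ, X (Pi.single j (t j)) ω⟫ : ℂ)) ∂P := by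
  intro t ht ξ
  set φ : EuclideanSpace ℝ (Fin d) → ℂ := fun v => Complex.exp (Complex.I * (⟪ξ, v⟫ : ℂ)) with hφdef
  have hφ : Continuous φ := by
    apply Complex.continuous_exp.comp
    exact continuous_const.mul (Complex.continuous_ofReal.comp
      (continuous_const.inner continuous_id))
  have hφadd : ∀ a b : EuclideanSpace ℝ (Fin d), φ (a + b) = φ a * φ b := by
    intro a b
    simp only [hφdef, inner_add_right]
    rw [← Complex.exp_add]
    push_cast
    ring_nf
  -- the key claim by induction on subsets
  have key : ∀ S : Finset (Fin N),
      (∫ ω, φ (X (fun j => if j ∈ S then t j else 0) ω) ∂P)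
        = ∏ j ∈ S, ∫ ω, φ (X (Pi.single j (t j)) ω) ∂P := by
    intro S
    induction S using Finset.induction_on with
    | empty =>
      have h0 : (fun j : Fin N => if j ∈ (∅ : Finset (Fin N)) then t j else 0) = 0 := by
        funext j; simp
      rw [h0, Finset.prod_empty]
      have : (∫ ω, φ (X 0 ω) ∂P) = ∫ _ω, (1 : ℂ) ∂P := by
        apply integral_congr_ae
        filter_upwards [hX0] with ω hω
        simp [hω, hφdef]
      rw [this]; simp
    | @insert j S hjS ih =>
      set s : Fin N → ℝ := fun k => if k ∈ S then t k else 0 with hsdef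
      set u : Fin N → ℝ := fun k => if k ∈ insert j S then t k else 0 with hudef
      have hs0 : ∀ k, 0 ≤ s k := by
        intro k; simp only [hsdef]; split <;> [exact ht k; exact le_refl 0]
      have hτ0 : ∀ k, 0 ≤ (Pi.single j (t j) : Fin N → ℝ) k := by
        intro k
        rcases eq_or_ne k j with rfl | hk
        · simp [ht k]
        · simp [Pi.single_apply, hk]
      have hsu : ∀ k, s k ≤ u k := by
        intro k
        simp only [hsdef, hudef, Finset.mem_insert]
        by_cases hk : k ∈ S
        · simp [hk]
        · simp only [hk, if_false, or_false]
          split <;> [exact ht k; exact le_refl 0]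
      have hu_eq : u = s + Pi.single j (t j) := by
        funext k
        simp only [hudef, hsdef, Pi.add_apply, Pi.single_apply, Finset.mem_insert]
        rcases eq_or_ne k j with rfl | hk
        · simp [hjS]
        · simp [hk]
      have hI : IndepFun (fun ω => X u ω - X s ω) (X s) P := hindep s u hs0 hsu
      have hsplit : (∫ ω, φ (X u ω) ∂P)
          = ∫ ω, φ (X u ω - X s ω) * φ (X s ω) ∂P := by
        apply integral_congr_ae
        filter_upwards with ω
        rw [← hφadd]
        congr 1
        abel
      have hmul := aux_indep_integral_mul (P := P)
        (show Measurable (fun ω => X u ω - X s ω) from (hXmeas u).sub (hXmeas s)) (hXmeas s) hI hφ hφ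
      have hinc : (∫ ω, φ (X u ω - X s ω) ∂P) = ∫ ω, φ (X (Pi.single j (t j)) ω) ∂P := by
        have hmap := hstat s (Pi.single j (t j)) hs0 hτ0
        rw [← hu_eq] at hmap
        calc (∫ ω, φ (X u ω - X s ω) ∂P)
            = ∫ v, φ v ∂(P.map (fun ω => X u ω - X s ω)) := by
              rw [integral_map (show Measurable (fun ω => X u ω - X s ω) from (hXmeas u).sub (hXmeas s)).aemeasurable
                hφ.aestronglyMeasurable]
          _ = ∫ v, φ v ∂(P.map (X (Pi.single j (t j)))) := by rw [hmap]
          _ = ∫ ω, φ (X (Pi.single j (t j)) ω) ∂P := by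
              rw [integral_map (hXmeas _).aemeasurable hφ.aestronglyMeasurable]
      rw [Finset.prod_insert hjS, ← ih, ← hinc, ← hmul, hsplit]
  have huniv := key Finset.univ
  have h1 : (fun j : Fin N => if j ∈ (Finset.univ : Finset (Fin N)) then t j else 0) = t := by
    funext j; simp
  rw [h1] at huniv
  exact huniv
end

section
/- Let X = (X_t) be a random field indexed by t ∈ [0,∞)^N with values in ℝ on a probability space, with X_0 = 0 almost surely, such that for every finite chain 0 = t⁰ ≼ t¹ ≼ ⋯ ≼ t^k in [0,∞)^N the increments X_{t^j} − X_{t^{j−1}} (j = 1,…,k) are mutually independent, and X_{t+τ} − X_t has the same law as X_τ for all t, τ. Assume each X_{t_j e_j} is square-integrable with E[X_{t_j e_j}] = t_j μ_j and Var(X_{t_j e_j}) = t_j σ_j² for all t_j ≥ 0 and reals μ_j, σ_j² ≥ 0. Then for all s ≼ t in [0,∞)^N: Cov(X_s, X_t) = Σ_{j=1}^N s_j σ_j², and consequently, whenever Σ_j s_j σ_j² > 0 and Σ_j t_j σ_j² > 0, the correlation coefficient equals ρ(X_s, X_t) = sqrt((Σ_j s_j σ_j²)/(Σ_j t_j σ_j²)).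 (Proposition 2.10: autocorrelation function of a multiparameter Lévy process.) -/
open MeasureTheory ProbabilityTheory

/-- The covariance `Cov(U,V) = E[UV] − E[U]E[V]`. -/
noncomputable def covP {Ω : Type*} [MeasurableSpace Ω] (P : Measure Ω)
    (U V : Ω → ℝ) : ℝ :=
  (∫ ω, U ω * V ω ∂P) - (∫ ω, U ω ∂P) * (∫ ω, V ω ∂P)

section Aux

variable {Ω : Type*} [MeasurableSpace Ω] {P : Measure Ω}

lemma aux_integral_comp_eq {f g : Ω → ℝ} (hf : Measurable f) (hg : Measurable g)
    (h : P.map f = P.map g) {φ : ℝ → ℝ} (hφ : Measurable φ) :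
    ∫ ω, φ (f ω) ∂P = ∫ ω, φ (g ω) ∂P := by
  rw [← integral_map hf.aemeasurable hφ.aestronglyMeasurable, h,
    integral_map hg.aemeasurable hφ.aestronglyMeasurable]

lemma aux_memℒp {f g : Ω → ℝ} (hf : Measurable f) (hg : Measurable g)
    (h : P.map f = P.map g) (hgL2 : MemLp g 2 P) : MemLp f 2 P := by
  have h1 : MemLp (id : ℝ → ℝ) 2 (P.map g) :=
    (memLp_map_measure_iff aestronglyMeasurable_id hg.aemeasurable).mpr
      (by simpa [Function.comp] using hgL2)
  rw [← h] at h1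
  simpa [Function.comp] using
    (memLp_map_measure_iff aestronglyMeasurable_id hf.aemeasurable).mp h1

lemma aux_variance_map [IsProbabilityMeasure P] {f g : Ω → ℝ}
    (hf : Measurable f) (hg : Measurable g)
    (h : P.map f = P.map g) (hgL2 : MemLp g 2 P) :
    variance f P = variance g P := by
  have hfL2 := aux_memℒp hf hg h hgL2
  have h1 : ∫ ω, f ω ∂P = ∫ ω, g ω ∂P :=
    aux_integral_comp_eq hf hg h measurable_id
  have h2 : ∫ ω, (f ω) ^ 2 ∂P = ∫ ω, (g ω) ^ 2 ∂P :=
    aux_integral_comp_eq hf hg h (measurable_id.pow_const 2)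
  rw [variance_eq_sub hfL2, variance_eq_sub hgL2]
  simp only [Pi.pow_apply]
  rw [h1, h2]

lemma aux_variance_congr {f g : Ω → ℝ} (h : f =ᵐ[P] g) :
    variance f P = variance g P := by
  have hint : ∫ ω, f ω ∂P = ∫ ω, g ω ∂P := integral_congr_ae h
  unfold ProbabilityTheory.variance ProbabilityTheory.evariance
  congr 1
  apply lintegral_congr_ae
  filter_upwards [h] with ω hω
  rw [hω, hint]

end Aux

/-- Proposition 2.10: for a real-valued multiparameter Lévy process and `s ≼ t`,
`Cov(X_s, X_t) = ∑_j s_j σ_j²`, and hence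
`ρ(X_s, X_t) = sqrt((∑_j s_j σ_j²)/(∑_j t_j σ_j²))`. -/
theorem stmt_4
    {Ω : Type*} [MeasurableSpace Ω] (P : Measure Ω) [IsProbabilityMeasure P]
    {N : ℕ}
    (X : (Fin N → ℝ) → Ω → ℝ)
    (hXmeas : ∀ t, Measurable (X t))
    (hX0 : ∀ᵐ ω ∂P, X 0 ω = 0)
    (hchain : ∀ (k : ℕ) (c : Fin (k + 1) → Fin N → ℝ), c 0 = 0 →
      (∀ i j, 0 ≤ c i j) → (∀ (i : Fin k) (j : Fin N), c i.castSucc j ≤ c i.succ j) →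
      iIndepFun
        (fun i : Fin k => fun ω => X (c i.succ) ω - X (c i.castSucc) ω) P)
    (hstat : ∀ t τ : Fin N → ℝ, (∀ j, 0 ≤ t j) → (∀ j, 0 ≤ τ j) →
      Measure.map (fun ω => X (t + τ) ω - X t ω) P = Measure.map (X τ) P)
    (μ σ2 : Fin N → ℝ) (hσ2 : ∀ j, 0 ≤ σ2 j)
    (hL2 : ∀ (j : Fin N) (r : ℝ), 0 ≤ r → MemLp (X (Pi.single j r)) 2 P)
    (hmean : ∀ (j : Fin N) (r : ℝ), 0 ≤ r → ∫ ω, X (Pi.single j r) ω ∂P = r * μ j)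
    (hvar : ∀ (j : Fin N) (r : ℝ), 0 ≤ r → variance (X (Pi.single j r)) P = r * σ2 j) :
    ∀ s t : Fin N → ℝ, (∀ j, 0 ≤ s j) → (∀ j, s j ≤ t j) →
      covP P (X s) (X t) = ∑ j, s j * σ2 j ∧
      (0 < ∑ j, s j * σ2 j → 0 < ∑ j, t j * σ2 j →
        covP P (X s) (X t) /
            (Real.sqrt (variance (X s) P) * Real.sqrt (variance (X t) P)) =
          Real.sqrt ((∑ j, s j * σ2 j) / (∑ j, t j * σ2 j))) := by
  classical
  -- Key lemma: for any u ≽ 0, X u is L² with variance ∑ u_j σ2_j.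
  have key : ∀ u : Fin N → ℝ, (∀ j, 0 ≤ u j) →
      MemLp (X u) 2 P ∧ variance (X u) P = ∑ j, u j * σ2 j := by
    intro u hu
    set d : ℕ → Fin N → ℝ := fun i j => if (j : ℕ) < i then u j else 0 with hd
    have hd0 : d 0 = 0 := by funext j; simp [d]
    have hdN : d N = u := by funext j; simp [d, j.isLt]
    have hdnn : ∀ i j, 0 ≤ d i j := by
      intro i j
      simp only [hd]
      split_ifs
      · exact hu j
      · exact le_rfl
    have hsingle_nn : ∀ i : Fin N, ∀ j, 0 ≤ (Pi.single i (u i) : Fin N → ℝ) j := by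
      intro i j
      rcases eq_or_ne j i with rfl | hne
      · simpa using hu j
      · simp [Pi.single_eq_of_ne hne]
    have hstep : ∀ i : Fin N, d ((i : ℕ) + 1) = d (i : ℕ) + Pi.single i (u i) := by
      intro i; funext j
      simp only [Pi.add_apply, d, Pi.single_apply]
      by_cases hlt : (j : ℕ) < (i : ℕ)
      · have h1 : (j : ℕ) < (i : ℕ) + 1 := by omega
        have hne : j ≠ i := Fin.ne_of_val_ne (by omega)
        simp [hlt, h1, hne]
      · by_cases heq : j = i
        · subst heq
          simp [hlt, Nat.lt_succ_self]
        · have hne' : (j : ℕ) ≠ (i : ℕ) := Fin.val_ne_of_ne heq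
          have h1 : ¬ (j : ℕ) < (i : ℕ) + 1 := by omega
          simp [hlt, h1, heq]
    set Y : Fin N → Ω → ℝ := fun i ω => X (d ((i : ℕ) + 1)) ω - X (d (i : ℕ)) ω with hY
    have hYmeas : ∀ i, Measurable (Y i) := fun i => (hXmeas _).sub (hXmeas _)
    have hYlaw : ∀ i : Fin N, P.map (Y i) = P.map (X (Pi.single i (u i))) := by
      intro i
      have h := hstat (d (i : ℕ)) (Pi.single i (u i)) (hdnn _) (hsingle_nn i)
      rw [← hstep i] at h
      exact h
    have hYL2 : ∀ i, MemLp (Y i) 2 P := fun i =>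
      aux_memℒp (hYmeas i) (hXmeas _) (hYlaw i) (hL2 i (u i) (hu i))
    have hYvar : ∀ i, variance (Y i) P = u i * σ2 i := by
      intro i
      rw [aux_variance_map (hYmeas i) (hXmeas _) (hYlaw i) (hL2 i (u i) (hu i))]
      exact hvar i (u i) (hu i)
    have hindep : iIndepFun Y P := by
      have h := hchain N (fun i : Fin (N + 1) => d (i : ℕ))
        (by simpa using hd0) (fun i j => hdnn _ _)
        (by
          intro i j
          simp only [Fin.coe_castSucc, Fin.val_succ]
          dsimp [d]
          split_ifs with h1 h2
          · exact le_rfl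
          · omega
          · exact hu j
          · exact le_rfl)
      simpa [Y, Fin.val_succ, Fin.coe_castSucc] using h
    have hsum : ∀ ω, ∑ i : Fin N, Y i ω = X u ω - X 0 ω := by
      intro ω
      have h1 : ∑ i : Fin N, Y i ω
          = ∑ i ∈ Finset.range N, (X (d (i + 1)) ω - X (d i) ω) :=
        Fin.sum_univ_eq_sum_range (fun i => X (d (i + 1)) ω - X (d i) ω) N
      rw [h1, Finset.sum_range_sub (fun k => X (d k) ω) N, hdN, hd0]
    have hfun : (∑ i, Y i) = fun ω => ∑ i, Y i ω := by
      funext ω; simp [Finset.sum_apply]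
    have haesum : (∑ i, Y i) =ᵐ[P] X u := by
      rw [hfun]
      filter_upwards [hX0] with ω h0
      rw [hsum ω, h0, sub_zero]
    have hXuL2 : MemLp (X u) 2 P :=
      (memLp_finset_sum' _ (fun i _ => hYL2 i)).ae_eq haesum
    refine ⟨hXuL2, ?_⟩
    rw [← aux_variance_congr haesum,
      IndepFun.variance_sum (fun i _ => hYL2 i)
        (fun i _ j _ hij => hindep.indepFun hij)]
    exact Finset.sum_congr rfl fun i _ => hYvar i
  intro s t hs hst
  have ht : ∀ j, 0 ≤ t j := fun j => (hs j).trans (hst j)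
  obtain ⟨hsL2, hsvar⟩ := key s hs
  obtain ⟨htL2, htvar⟩ := key t ht
  set Z : Ω → ℝ := fun ω => X t ω - X s ω with hZ
  have hZmeas : Measurable Z := (hXmeas t).sub (hXmeas s)
  have hts_nn : ∀ j, 0 ≤ (t - s) j := fun j => sub_nonneg.mpr (hst j)
  have hZlaw : P.map Z = P.map (X (t - s)) := by
    have h := hstat s (t - s) hs hts_nn
    have hst' : s + (t - s) = t := by funext j; simp
    rw [hst'] at h
    exact h
  have hZL2 : MemLp Z 2 P :=
    aux_memℒp hZmeas (hXmeas _) hZlaw (key (t - s) hts_nn).1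
  have hindep2 : IndepFun (X s) Z P := by
    set c : Fin 3 → Fin N → ℝ := ![0, s, t] with hc
    have hc0 : c 0 = 0 := rfl
    have hcnn : ∀ i j, 0 ≤ c i j := by
      intro i j
      fin_cases i
      · simp [c]
      · simpa [c] using hs j
      · simpa [c] using ht j
    have hcmono : ∀ (i : Fin 2) (j : Fin N), c i.castSucc j ≤ c i.succ j := by
      intro i j
      fin_cases i
      · simpa [c] using hs j
      · simpa [c] using hst j
    have hch := hchain 2 c hc0 hcnn hcmono
    have h01 := hch.indepFun (show (0 : Fin 2) ≠ 1 by decide)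
    refine h01.congr ?_ ?_
    · filter_upwards [hX0] with ω h0
      show X (c (Fin.succ 0)) ω - X (c (Fin.castSucc 0)) ω = X s ω
      have e1 : c (Fin.succ 0) = s := rfl
      have e2 : c (Fin.castSucc 0) = 0 := rfl
      rw [e1, e2, h0, sub_zero]
    · apply Filter.Eventually.of_forall
      intro ω
      show X (c (Fin.succ 1)) ω - X (c (Fin.castSucc 1)) ω = Z ω
      rfl
  have hXs_int : Integrable (X s) P := hsL2.integrable one_le_two
  have hZ_int : Integrable Z P := hZL2.integrable one_le_two
  have hXsZ_int : Integrable (fun ω => X s ω * Z ω) P := by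
    have := hindep2.integrable_mul hXs_int hZ_int
    exact this
  have hXs2_int : Integrable (fun ω => X s ω * X s ω) P := by
    have := hsL2.integrable_sq
    simpa [pow_two] using this
  have hXt_eq : ∀ ω, X t ω = X s ω + Z ω := fun ω => by simp [Z]
  have hcov : covP P (X s) (X t) = variance (X s) P := by
    have e1 : ∫ ω, X s ω * X t ω ∂P
        = (∫ ω, X s ω * X s ω ∂P) + ∫ ω, X s ω * Z ω ∂P := by
      rw [← integral_add hXs2_int hXsZ_int]
      apply integral_congr_ae
      apply Filter.Eventually.of_forall
      intro ω
      show X s ω * X t ω = X s ω * X s ω + X s ω * Z ω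
      rw [hXt_eq ω]; ring
    have e2 : ∫ ω, X t ω ∂P = (∫ ω, X s ω ∂P) + ∫ ω, Z ω ∂P := by
      rw [← integral_add hXs_int hZ_int]
      apply integral_congr_ae
      apply Filter.Eventually.of_forall
      intro ω
      show X t ω = X s ω + Z ω
      rw [hXt_eq ω]
    have e3 : ∫ ω, X s ω * Z ω ∂P = (∫ ω, X s ω ∂P) * ∫ ω, Z ω ∂P :=
      hindep2.integral_mul_eq_mul_integral hXs_int.1 hZ_int.1
    have e4 : ∫ ω, X s ω * X s ω ∂P = ∫ ω, (X s ω) ^ 2 ∂P := by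
      apply integral_congr_ae
      apply Filter.Eventually.of_forall
      intro ω
      show X s ω * X s ω = X s ω ^ 2
      ring
    unfold covP
    rw [e1, e2, e3, e4, variance_eq_sub hsL2]
    simp only [Pi.pow_apply]
    ring
  refine ⟨hcov.trans hsvar, ?_⟩
  intro hps hpt
  rw [hcov, hsvar, htvar]
  set a := ∑ j, s j * σ2 j
  set b := ∑ j, t j * σ2 j
  rw [Real.sqrt_div hps.le b]
  have hsa : Real.sqrt a * Real.sqrt a = a := Real.mul_self_sqrt hps.le
  have hane : Real.sqrt a ≠ 0 := by positivity
  calc a / (Real.sqrt a * Real.sqrt b)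
      = (Real.sqrt a * Real.sqrt a) / (Real.sqrt a * Real.sqrt b) := by rw [hsa]
    _ = Real.sqrt a / Real.sqrt b := mul_div_mul_left _ _ hane
end

section
/- Let ψ : ℝ^d → ℂ be measurable with Re ψ(ξ) ≤ 0 for all ξ and |ψ(ξ)| ≤ C(1 + |ξ|²) for some constant C > 0. Then for every Schwartz function h : ℝ^d → ℂ and every x ∈ ℝ^d, lim_{s → 0⁺} (1/s) · (2π)^{−d/2} ∫_{ℝ^d} e^{i⟨ξ,x⟩} (e^{s ψ(ξ)} − 1) ĥ(ξ) dξ = (2π)^{−d/2} ∫_{ℝ^d} e^{i⟨ξ,x⟩} ψ(ξ) ĥ(ξ) dξ. In particular, if for each s > 0 the function e^{sψ} is the characteristic function of a probability measure μ_s on ℝ^d and T_s h(x) = ∫ h(x+y) μ_s(dy), then the generator limit lim_{s→0⁺}(T_s h(x) − h(x))/s exists and equals the pseudo-differential operator with symbol ψ applied to h at x. (Theorem 2.16, part 2: the generator of the Feller semigroup of a multiparameter Lévy process is a pseudo-differential operator with symbol given by the Lévy exponent.) -/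
open MeasureTheory Complex FourierTransform Real Filter
open scoped RealInnerProductSpace SchwartzMap

/-- The Fourier transform `ĥ(ξ) = (2π)^{-d/2} ∫ e^{-i⟨ξ,y⟩} h(y) dy`. -/
noncomputable def fourierT {d : ℕ} (h : EuclideanSpace ℝ (Fin d) → ℂ)
    (ξ : EuclideanSpace ℝ (Fin d)) : ℂ :=
  (((2 * Real.pi) ^ (-(d : ℝ) / 2) : ℝ) : ℂ) *
    ∫ y, Complex.exp (-Complex.I * (⟪ξ, y⟫ : ℂ)) * h y


lemma norm_cexp_sub_one_le {z : ℂ} (hz : z.re ≤ 0) : ‖Complex.exp z - 1‖ ≤ ‖z‖ := by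
  have hd : ∀ t ∈ Set.uIcc (0:ℝ) 1, HasDerivAt (fun t : ℝ => Complex.exp (t * z))
      (z * Complex.exp (t * z)) t := by
    intro t _
    have h1 : HasDerivAt (fun t : ℝ => (t : ℂ)) 1 t := by
      simpa using (hasDerivAt_id t).ofReal_comp
    have := ((h1.mul_const z).cexp)
    simpa [mul_comm] using this
  have hint : IntervalIntegrable (fun t : ℝ => z * Complex.exp (t * z)) volume 0 1 := by
    apply Continuous.intervalIntegrable
    fun_prop
  have key := intervalIntegral.integral_eq_sub_of_hasDerivAt hd hint
  have h2 : Complex.exp z - 1 = ∫ t in (0:ℝ)..1, z * Complex.exp (t * z) := by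
    simpa using key.symm
  rw [h2]
  have := intervalIntegral.norm_integral_le_of_norm_le_const (C := ‖z‖)
    (f := fun t : ℝ => z * Complex.exp (t * z)) (a := 0) (b := 1) ?_
  · simpa using this
  · intro t ht
    rw [Set.uIoc_of_le zero_le_one] at ht
    have ht0 : 0 ≤ t := le_of_lt ht.1
    have : ‖Complex.exp (t * z)‖ ≤ 1 := by
      rw [Complex.norm_exp]
      have : ((t : ℂ) * z).re = t * z.re := by simp
      rw [this]
      exact Real.exp_le_one_iff.mpr (mul_nonpos_of_nonneg_of_nonpos ht0 hz)
    calc ‖z * Complex.exp (t * z)‖ = ‖z‖ * ‖Complex.exp (t*z)‖ := by simp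
    _ ≤ ‖z‖ * 1 := by gcongr
    _ = ‖z‖ := mul_one _

lemma fourierT_eq {d : ℕ} (h : EuclideanSpace ℝ (Fin d) → ℂ) (ξ : EuclideanSpace ℝ (Fin d)) :
    fourierT h ξ = (((2 * Real.pi) ^ (-(d : ℝ) / 2) : ℝ) : ℂ) *
      𝓕 h ((2 * Real.pi)⁻¹ • ξ) := by
  rw [fourierT, Real.fourier_eq']
  congr 1
  apply integral_congr_ae
  filter_upwards with y
  rw [real_inner_smul_right, smul_eq_mul]
  have hπ : (2 * Real.pi) ≠ 0 := by positivity
  have : -2 * Real.pi * ((2 * Real.pi)⁻¹ * ⟪y, ξ⟫) = -⟪y, ξ⟫ := by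
    field_simp
  rw [this, real_inner_comm y ξ]
  push_cast
  ring

lemma c_sq {d : ℕ} : (((2 * Real.pi) ^ (-(d : ℝ) / 2) : ℝ) : ℂ) *
    ((((2 * Real.pi) ^ (-(d : ℝ) / 2) : ℝ) : ℂ) * ((2 * Real.pi) ^ (d : ℕ) : ℝ)) = 1 := by
  have hπ : (0:ℝ) < 2 * Real.pi := by positivity
  have : ((2 * Real.pi) ^ (-(d : ℝ) / 2) : ℝ) * ((2 * Real.pi) ^ (-(d : ℝ) / 2) : ℝ) *
      ((2 * Real.pi) ^ (d : ℕ) : ℝ) = 1 := by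
    rw [← Real.rpow_add hπ, ← Real.rpow_natCast (2 * Real.pi) d, ← Real.rpow_add hπ]
    norm_num
  calc (((2 * Real.pi) ^ (-(d : ℝ) / 2) : ℝ) : ℂ) *
      ((((2 * Real.pi) ^ (-(d : ℝ) / 2) : ℝ) : ℂ) * ((2 * Real.pi) ^ (d : ℕ) : ℝ))
      = ((((2 * Real.pi) ^ (-(d : ℝ) / 2) : ℝ) * ((2 * Real.pi) ^ (-(d : ℝ) / 2) : ℝ) *
        ((2 * Real.pi) ^ (d : ℕ) : ℝ) : ℝ) : ℂ) := by push_cast; ring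
    _ = 1 := by rw [this]; norm_num

lemma inversion {d : ℕ} (h : SchwartzMap (EuclideanSpace ℝ (Fin d)) ℂ)
    (x : EuclideanSpace ℝ (Fin d)) :
    (((2 * Real.pi) ^ (-(d : ℝ) / 2) : ℝ) : ℂ) *
      ∫ ξ, Complex.exp (Complex.I * (⟪ξ, x⟫ : ℂ)) * fourierT (fun y => h y) ξ = h x := by
  have hπ : (0:ℝ) < 2 * Real.pi := by positivity
  set c : ℝ := (2 * Real.pi) ^ (-(d : ℝ) / 2) with hc
  set g : EuclideanSpace ℝ (Fin d) → ℂ := 𝓕 (fun y => h y) with hg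
  have step1 : ∫ ξ, Complex.exp (Complex.I * (⟪ξ, x⟫ : ℂ)) * fourierT (fun y => h y) ξ
      = (c : ℂ) * ∫ ξ, Complex.exp (Complex.I * (⟪ξ, x⟫ : ℂ)) * g ((2 * Real.pi)⁻¹ • ξ) := by
    rw [← integral_const_mul]
    congr 1; ext ξ
    rw [fourierT_eq]
    ring
  set G : EuclideanSpace ℝ (Fin d) → ℂ :=
    fun η => Complex.exp (Complex.I * (⟪(2 * Real.pi) • η, x⟫ : ℂ)) * g η with hG
  have step2 : ∫ ξ, Complex.exp (Complex.I * (⟪ξ, x⟫ : ℂ)) * g ((2 * Real.pi)⁻¹ • ξ)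
      = ((2 * Real.pi) ^ (d:ℕ) : ℝ) • ∫ η, G η := by
    have : ∀ ξ, Complex.exp (Complex.I * (⟪ξ, x⟫ : ℂ)) * g ((2 * Real.pi)⁻¹ • ξ)
        = G ((2 * Real.pi)⁻¹ • ξ) := by
      intro ξ
      simp only [hG, smul_smul, mul_inv_cancel₀ (ne_of_gt hπ), one_smul]
    simp_rw [this]
    rw [MeasureTheory.Measure.integral_comp_inv_smul_of_nonneg volume G (le_of_lt hπ),
      finrank_euclideanSpace_fin]
  have step3 : ∫ η, G η = 𝓕⁻ g x := by
    rw [Real.fourierInv_eq']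
    congr 1; ext η
    simp only [hG]
    rw [real_inner_smul_left, smul_eq_mul, mul_comm Complex.I]
  have hg' : g = ⇑(SchwartzMap.fourierTransformCLM ℂ h) := by
    rw [hg, SchwartzMap.fourierTransformCLM_apply, SchwartzMap.fourier_coe]
  have hint : Integrable g := by
    rw [hg']; exact (SchwartzMap.fourierTransformCLM ℂ h).integrable
  have hinv : 𝓕⁻ g x = h x := by
    exact MeasureTheory.Integrable.fourierInv_fourier_eq (f := fun y => h y) (v := x)
      h.integrable (by rw [← hg]; exact hint) (h.continuous.continuousAt)
  rw [step1, step2, step3, hinv, Complex.real_smul]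
  have := c_sq (d := d)
  linear_combination (h x : ℂ) * this

lemma fourierT_continuous {d : ℕ} (h : SchwartzMap (EuclideanSpace ℝ (Fin d)) ℂ) :
    Continuous (fourierT (fun y => h y)) := by
  have heq : fourierT (fun y => h y) = fun ξ => (((2 * Real.pi) ^ (-(d : ℝ) / 2) : ℝ) : ℂ) *
      (SchwartzMap.fourierTransformCLM ℂ h) ((2 * Real.pi)⁻¹ • ξ) := by
    funext ξ
    rw [fourierT_eq, SchwartzMap.fourierTransformCLM_apply, SchwartzMap.fourier_coe]
  rw [heq]
  exact continuous_const.mul ((SchwartzMap.fourierTransformCLM ℂ h).continuous.comp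
    (continuous_const_smul _))

lemma fourierT_weight_integrable {d : ℕ} (h : SchwartzMap (EuclideanSpace ℝ (Fin d)) ℂ) :
    Integrable (fun ξ => (1 + ‖ξ‖ ^ 2) * ‖fourierT (fun y => h y) ξ‖) := by
  have hπ : (0:ℝ) < 2 * Real.pi := by positivity
  set c : ℝ := (2 * Real.pi) ^ (-(d : ℝ) / 2) with hc
  have hc0 : 0 < c := Real.rpow_pos_of_pos hπ _
  set g := ⇑(SchwartzMap.fourierTransformCLM ℂ h) with hg
  have hq : Integrable (fun η => (1 + (2 * Real.pi) ^ 2 * ‖η‖ ^ 2) * ‖g η‖) := by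
    have h1 := (SchwartzMap.fourierTransformCLM ℂ h).integrable (μ := volume)
    have h2 := (SchwartzMap.fourierTransformCLM ℂ h).integrable_pow_mul volume 2
    have h3 := h1.norm.add (h2.const_mul ((2 * Real.pi) ^ 2))
    have : (fun η => (1 + (2 * Real.pi) ^ 2 * ‖η‖ ^ 2) * ‖g η‖)
        = fun η => ‖g η‖ + (2 * Real.pi) ^ 2 * (‖η‖ ^ 2 * ‖g η‖) := by ext η; ring
    rw [this]
    exact h3
  have hcomp : Integrable
      (fun ξ => (1 + (2 * Real.pi) ^ 2 * ‖(2 * Real.pi)⁻¹ • ξ‖ ^ 2) * ‖g ((2 * Real.pi)⁻¹ • ξ)‖) :=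
    (MeasureTheory.integrable_comp_smul_iff volume
      (fun η => (1 + (2 * Real.pi) ^ 2 * ‖η‖ ^ 2) * ‖g η‖)
      (inv_ne_zero (ne_of_gt hπ))).mpr hq
  have heq : (fun ξ => (1 + ‖ξ‖ ^ 2) * ‖fourierT (fun y => h y) ξ‖)
      = fun ξ => c * ((1 + (2 * Real.pi) ^ 2 * ‖(2 * Real.pi)⁻¹ • ξ‖ ^ 2) *
        ‖g ((2 * Real.pi)⁻¹ • ξ)‖) := by
    funext ξ
    rw [fourierT_eq]
    have hns : ‖(2 * Real.pi)⁻¹ • ξ‖ = (2 * Real.pi)⁻¹ * ‖ξ‖ := by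
      rw [norm_smul, Real.norm_eq_abs, abs_of_pos (inv_pos.mpr hπ)]
    have hnm : ‖(c : ℂ) * 𝓕 (fun y => h y) ((2 * Real.pi)⁻¹ • ξ)‖ =
        c * ‖g ((2 * Real.pi)⁻¹ • ξ)‖ := by
      rw [norm_mul, Complex.norm_real, Real.norm_eq_abs, abs_of_pos hc0, hg,
        SchwartzMap.fourierTransformCLM_apply, SchwartzMap.fourier_coe]
    rw [hnm, hns]
    have h2 : Real.pi ≠ 0 := Real.pi_ne_zero
    field_simp
  rw [heq]
  exact hcomp.const_mul c

lemma fourierT_norm_integrable {d : ℕ} (h : SchwartzMap (EuclideanSpace ℝ (Fin d)) ℂ) :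
    Integrable (fun ξ => ‖fourierT (fun y => h y) ξ‖) := by
  apply (fourierT_weight_integrable h).mono' ((fourierT_continuous h).norm.aestronglyMeasurable)
  filter_upwards with ξ
  rw [Real.norm_eq_abs, _root_.abs_of_nonneg (norm_nonneg _)]
  nlinarith [norm_nonneg (fourierT (fun y => h y) ξ), sq_nonneg ‖ξ‖,
    norm_nonneg ξ]

lemma tendsto_quot (z : ℂ) :
    Tendsto (fun s : ℝ => (1 / (s : ℂ)) * (Complex.exp ((s : ℂ) * z) - 1))
      (nhdsWithin 0 (Set.Ioi 0)) (nhds z) := by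
  have h1 : HasDerivAt (fun s : ℝ => (s : ℂ)) 1 0 := by
    simpa using (hasDerivAt_id (0:ℝ)).ofReal_comp
  have hD : HasDerivAt (fun s : ℝ => Complex.exp ((s : ℂ) * z)) z 0 := by
    simpa using (h1.mul_const z).cexp
  have hslope := hasDerivAt_iff_tendsto_slope.mp hD
  have hmono : nhdsWithin (0:ℝ) (Set.Ioi 0) ≤ nhdsWithin 0 {(0:ℝ)}ᶜ :=
    nhdsWithin_mono 0 (fun s hs => ne_of_gt hs)
  have := hslope.mono_left hmono
  apply this.congr
  intro s
  simp only [slope, vsub_eq_sub, sub_zero, Complex.real_smul, Complex.ofReal_inv,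
    Complex.exp_zero, Complex.ofReal_zero, zero_mul]
  ring

theorem part1 {d : ℕ}
    (ψ : EuclideanSpace ℝ (Fin d) → ℂ) (hψmeas : Measurable ψ)
    (hre : ∀ ξ, (ψ ξ).re ≤ 0)
    (C : ℝ) (hC : 0 < C)
    (hbound : ∀ ξ, ‖ψ ξ‖ ≤ C * (1 + ‖ξ‖ ^ 2))
    (h : SchwartzMap (EuclideanSpace ℝ (Fin d)) ℂ)
    (x : EuclideanSpace ℝ (Fin d)) :
    Filter.Tendsto
      (fun s : ℝ => (1 / (s : ℂ)) *
        ((((2 * Real.pi) ^ (-(d : ℝ) / 2) : ℝ) : ℂ) *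
          ∫ ξ, Complex.exp (Complex.I * (⟪ξ, x⟫ : ℂ)) *
            (Complex.exp ((s : ℂ) * ψ ξ) - 1) * fourierT (fun y => h y) ξ))
      (nhdsWithin 0 (Set.Ioi 0))
      (nhds ((((2 * Real.pi) ^ (-(d : ℝ) / 2) : ℝ) : ℂ) *
        ∫ ξ, Complex.exp (Complex.I * (⟪ξ, x⟫ : ℂ)) * ψ ξ * fourierT (fun y => h y) ξ)) := by
  set c : ℝ := (2 * Real.pi) ^ (-(d : ℝ) / 2) with hc
  set gT := fourierT (fun y => h y) with hgT
  have hcont : Continuous gT := fourierT_continuous h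
  have hA : Continuous fun ξ : EuclideanSpace ℝ (Fin d) =>
      Complex.exp (Complex.I * (⟪ξ, x⟫ : ℂ)) :=
    Complex.continuous_exp.comp (continuous_const.mul
      (Complex.continuous_ofReal.comp (continuous_id.inner continuous_const)))
  have key := MeasureTheory.tendsto_integral_filter_of_dominated_convergence
    (μ := (volume : Measure (EuclideanSpace ℝ (Fin d))))
    (F := fun (s : ℝ) ξ => (1 / (s : ℂ)) * (Complex.exp (Complex.I * (⟪ξ, x⟫ : ℂ)) *
      (Complex.exp ((s : ℂ) * ψ ξ) - 1) * gT ξ))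
    (f := fun ξ => Complex.exp (Complex.I * (⟪ξ, x⟫ : ℂ)) * ψ ξ * gT ξ)
    (l := nhdsWithin 0 (Set.Ioi 0))
    (bound := fun ξ => C * ((1 + ‖ξ‖ ^ 2) * ‖gT ξ‖))
    ?_ ?_ ?_ ?_
  · have heq : (fun s : ℝ => (1 / (s : ℂ)) * ((c : ℂ) *
        ∫ ξ, Complex.exp (Complex.I * (⟪ξ, x⟫ : ℂ)) *
          (Complex.exp ((s : ℂ) * ψ ξ) - 1) * gT ξ))
        = fun s : ℝ => (c : ℂ) * ∫ ξ, (1 / (s : ℂ)) *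
          (Complex.exp (Complex.I * (⟪ξ, x⟫ : ℂ)) *
            (Complex.exp ((s : ℂ) * ψ ξ) - 1) * gT ξ) := by
      funext s
      rw [integral_const_mul]
      ring
    rw [heq]
    exact key.const_mul (c : ℂ)
  · filter_upwards with s
    exact ((((hA.aestronglyMeasurable).mul
      (((Complex.measurable_exp.comp (hψmeas.const_mul ((s : ℂ)))).sub
        measurable_const).aestronglyMeasurable)).mul
      hcont.aestronglyMeasurable).const_mul _)
  · filter_upwards [self_mem_nhdsWithin] with s hs
    have hs0 : (0:ℝ) < s := hs
    filter_upwards with ξ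
    have hAn : ‖Complex.exp (Complex.I * (⟪ξ, x⟫ : ℂ))‖ = 1 := by
      rw [Complex.norm_exp]
      simp
    have hre' : ((s : ℂ) * ψ ξ).re ≤ 0 := by
      have : ((s : ℂ) * ψ ξ).re = s * (ψ ξ).re := by simp
      rw [this]
      exact mul_nonpos_of_nonneg_of_nonpos hs0.le (hre ξ)
    have hE : ‖Complex.exp ((s : ℂ) * ψ ξ) - 1‖ ≤ s * ‖ψ ξ‖ := by
      have h1 := norm_cexp_sub_one_le hre'
      have h2 : ‖(s : ℂ) * ψ ξ‖ = s * ‖ψ ξ‖ := by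
        rw [norm_mul, Complex.norm_real, Real.norm_eq_abs, abs_of_pos hs0]
      rwa [h2] at h1
    have hψb : ‖ψ ξ‖ ≤ C * (1 + ‖ξ‖ ^ 2) := hbound ξ
    have hsn : ‖(1 / (s : ℂ))‖ = 1 / s := by
      rw [norm_div, norm_one, Complex.norm_real, Real.norm_eq_abs, abs_of_pos hs0]
    rw [norm_mul, norm_mul, norm_mul, hAn, hsn, one_mul]
    calc (1 / s) * (‖Complex.exp ((s : ℂ) * ψ ξ) - 1‖ * ‖gT ξ‖)
        ≤ (1 / s) * ((s * ‖ψ ξ‖) * ‖gT ξ‖) := by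
          apply mul_le_mul_of_nonneg_left _ (by positivity)
          exact mul_le_mul_of_nonneg_right hE (norm_nonneg _)
      _ = ‖ψ ξ‖ * ‖gT ξ‖ := by field_simp
      _ ≤ (C * (1 + ‖ξ‖ ^ 2)) * ‖gT ξ‖ :=
          mul_le_mul_of_nonneg_right hψb (norm_nonneg _)
      _ = C * ((1 + ‖ξ‖ ^ 2) * ‖gT ξ‖) := by ring
  · exact (fourierT_weight_integrable h).const_mul C
  · filter_upwards with ξ
    have h3 := (tendsto_quot (ψ ξ)).const_mul
      (Complex.exp (Complex.I * (⟪ξ, x⟫ : ℂ)) * gT ξ)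
    have h4 : (fun s : ℝ => Complex.exp (Complex.I * (⟪ξ, x⟫ : ℂ)) * gT ξ *
        ((1 / (s : ℂ)) * (Complex.exp ((s : ℂ) * ψ ξ) - 1)))
        = fun s : ℝ => (1 / (s : ℂ)) * (Complex.exp (Complex.I * (⟪ξ, x⟫ : ℂ)) *
          (Complex.exp ((s : ℂ) * ψ ξ) - 1) * gT ξ) := by
      funext s; ring
    have h5 : Complex.exp (Complex.I * (⟪ξ, x⟫ : ℂ)) * gT ξ * ψ ξ
        = Complex.exp (Complex.I * (⟪ξ, x⟫ : ℂ)) * ψ ξ * gT ξ := by ring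
    rw [h4, h5] at h3
    exact h3

theorem Tsh {d : ℕ}
    (ψ : EuclideanSpace ℝ (Fin d) → ℂ) (hψmeas : Measurable ψ)
    (hre : ∀ ξ, (ψ ξ).re ≤ 0)
    (h : SchwartzMap (EuclideanSpace ℝ (Fin d)) ℂ)
    (x : EuclideanSpace ℝ (Fin d))
    (μ : Measure (EuclideanSpace ℝ (Fin d))) (hμ : IsProbabilityMeasure μ)
    {s : ℝ} (hs : 0 < s)
    (hchar : ∀ ξ : EuclideanSpace ℝ (Fin d),
      ∫ y, Complex.exp (Complex.I * (⟪ξ, y⟫ : ℂ)) ∂μ = Complex.exp ((s : ℂ) * ψ ξ)) :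
    ((∫ y, h (x + y) ∂μ) - h x) / (s : ℂ) =
      (1 / (s : ℂ)) *
        ((((2 * Real.pi) ^ (-(d : ℝ) / 2) : ℝ) : ℂ) *
          ∫ ξ, Complex.exp (Complex.I * (⟪ξ, x⟫ : ℂ)) *
            (Complex.exp ((s : ℂ) * ψ ξ) - 1) * fourierT (fun y => h y) ξ) := by
  haveI := hμ
  set c : ℝ := (2 * Real.pi) ^ (-(d : ℝ) / 2) with hc
  set gT := fourierT (fun y => h y) with hgT
  have hcont : Continuous gT := fourierT_continuous h
  have hgint : Integrable (fun ξ => ‖gT ξ‖) := fourierT_norm_integrable h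
  have hA : Continuous fun ξ : EuclideanSpace ℝ (Fin d) =>
      Complex.exp (Complex.I * (⟪ξ, x⟫ : ℂ)) :=
    Complex.continuous_exp.comp (continuous_const.mul
      (Complex.continuous_ofReal.comp (continuous_id.inner continuous_const)))
  have hAn : ∀ (v w : EuclideanSpace ℝ (Fin d)),
      ‖Complex.exp (Complex.I * (⟪v, w⟫ : ℂ))‖ = 1 := by
    intro v w
    rw [Complex.norm_exp]
    simp
  -- step A : T_s h x
  have hf_meas : Continuous (fun p : EuclideanSpace ℝ (Fin d) × EuclideanSpace ℝ (Fin d) =>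
      Complex.exp (Complex.I * (⟪p.2, x + p.1⟫ : ℂ)) * gT p.2) :=
    (Complex.continuous_exp.comp (continuous_const.mul
      (Complex.continuous_ofReal.comp (continuous_snd.inner
        (continuous_const.add continuous_fst))))).mul (hcont.comp continuous_snd)
  have hprod : Integrable
      (fun z : EuclideanSpace ℝ (Fin d) × EuclideanSpace ℝ (Fin d) => ‖gT z.2‖)
      (μ.prod volume) := by
    have := (integrable_const (1:ℝ) (μ := μ)).mul_prod hgint
    simpa using this
  have hunc : Integrable
      (Function.uncurry fun y ξ => Complex.exp (Complex.I * (⟪ξ, x + y⟫ : ℂ)) * gT ξ)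
      (μ.prod volume) := by
    apply hprod.mono' hf_meas.aestronglyMeasurable
    filter_upwards with z
    rw [norm_mul, hAn]
    simp [Function.uncurry]
  have hswap := integral_integral_swap hunc
  have hTs : ∫ y, h (x + y) ∂μ =
      (c : ℂ) * ∫ ξ, Complex.exp (Complex.I * (⟪ξ, x⟫ : ℂ)) *
        Complex.exp ((s : ℂ) * ψ ξ) * gT ξ := by
    have h1 : ∫ y, h (x + y) ∂μ = ∫ y, ((c : ℂ) *
        ∫ ξ, Complex.exp (Complex.I * (⟪ξ, x + y⟫ : ℂ)) * gT ξ) ∂μ := by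
      apply integral_congr_ae
      filter_upwards with y
      exact (inversion h (x + y)).symm
    rw [h1, integral_const_mul]
    congr 1
    rw [hswap]
    apply integral_congr_ae
    filter_upwards with ξ
    have hsplit : ∀ y : EuclideanSpace ℝ (Fin d),
        Complex.exp (Complex.I * (⟪ξ, x + y⟫ : ℂ)) * gT ξ =
        (Complex.exp (Complex.I * (⟪ξ, x⟫ : ℂ)) * gT ξ) *
          Complex.exp (Complex.I * (⟪ξ, y⟫ : ℂ)) := by
      intro y
      rw [inner_add_right]
      push_cast
      rw [mul_add, Complex.exp_add]
      ring
    calc ∫ y, Complex.exp (Complex.I * (⟪ξ, x + y⟫ : ℂ)) * gT ξ ∂μ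
        = ∫ y, (Complex.exp (Complex.I * (⟪ξ, x⟫ : ℂ)) * gT ξ) *
            Complex.exp (Complex.I * (⟪ξ, y⟫ : ℂ)) ∂μ := by
          exact integral_congr_ae (by filter_upwards with y; rw [hsplit y])
      _ = (Complex.exp (Complex.I * (⟪ξ, x⟫ : ℂ)) * gT ξ) *
            ∫ y, Complex.exp (Complex.I * (⟪ξ, y⟫ : ℂ)) ∂μ := integral_const_mul _ _
      _ = Complex.exp (Complex.I * (⟪ξ, x⟫ : ℂ)) * Complex.exp ((s : ℂ) * ψ ξ) * gT ξ := by
          rw [hchar ξ]; ring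
  -- step B : difference of integrals
  have hexp_le : ∀ ξ, ‖Complex.exp ((s : ℂ) * ψ ξ)‖ ≤ 1 := by
    intro ξ
    rw [Complex.norm_exp]
    have : ((s : ℂ) * ψ ξ).re = s * (ψ ξ).re := by simp
    rw [this]
    exact Real.exp_le_one_iff.mpr (mul_nonpos_of_nonneg_of_nonpos hs.le (hre ξ))
  have int_d : Integrable (fun ξ => Complex.exp (Complex.I * (⟪ξ, x⟫ : ℂ)) * gT ξ) := by
    apply hgint.mono' (hA.mul hcont).aestronglyMeasurable
    filter_upwards with ξ
    rw [Pi.mul_apply, norm_mul, hAn, one_mul]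
  have int_c : Integrable (fun ξ => Complex.exp (Complex.I * (⟪ξ, x⟫ : ℂ)) *
      Complex.exp ((s : ℂ) * ψ ξ) * gT ξ) := by
    apply hgint.mono'
    · exact ((hA.aestronglyMeasurable.mul
        ((Complex.measurable_exp.comp (hψmeas.const_mul ((s : ℂ)))).aestronglyMeasurable)).mul
        hcont.aestronglyMeasurable)
    · filter_upwards with ξ
      rw [norm_mul, norm_mul, hAn, one_mul]
      calc ‖Complex.exp ((s : ℂ) * ψ ξ)‖ * ‖gT ξ‖ ≤ 1 * ‖gT ξ‖ :=
            mul_le_mul_of_nonneg_right (hexp_le ξ) (norm_nonneg _)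
        _ = ‖gT ξ‖ := one_mul _
  have hsub : (∫ ξ, Complex.exp (Complex.I * (⟪ξ, x⟫ : ℂ)) *
        Complex.exp ((s : ℂ) * ψ ξ) * gT ξ) -
      (∫ ξ, Complex.exp (Complex.I * (⟪ξ, x⟫ : ℂ)) * gT ξ) =
      ∫ ξ, Complex.exp (Complex.I * (⟪ξ, x⟫ : ℂ)) *
        (Complex.exp ((s : ℂ) * ψ ξ) - 1) * gT ξ := by
    rw [← integral_sub int_c int_d]
    apply integral_congr_ae
    filter_upwards with ξ
    ring
  rw [hTs, ← inversion h x, ← hgT, ← hc]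
  rw [div_eq_mul_inv, ← mul_sub (c : ℂ), hsub]
  ring

/-- Theorem 2.16, part 2: the generator of the Feller semigroup of a (multiparameter)
Lévy process is a pseudo-differential operator with symbol given by the Lévy exponent. -/
theorem stmt_7 {d : ℕ}
    (ψ : EuclideanSpace ℝ (Fin d) → ℂ) (hψmeas : Measurable ψ)
    (hre : ∀ ξ, (ψ ξ).re ≤ 0)
    (C : ℝ) (hC : 0 < C)
    (hbound : ∀ ξ, ‖ψ ξ‖ ≤ C * (1 + ‖ξ‖ ^ 2))
    (h : SchwartzMap (EuclideanSpace ℝ (Fin d)) ℂ)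
    (x : EuclideanSpace ℝ (Fin d)) :
    Filter.Tendsto
      (fun s : ℝ => (1 / (s : ℂ)) *
        ((((2 * Real.pi) ^ (-(d : ℝ) / 2) : ℝ) : ℂ) *
          ∫ ξ, Complex.exp (Complex.I * (⟪ξ, x⟫ : ℂ)) *
            (Complex.exp ((s : ℂ) * ψ ξ) - 1) * fourierT (fun y => h y) ξ))
      (nhdsWithin 0 (Set.Ioi 0))
      (nhds ((((2 * Real.pi) ^ (-(d : ℝ) / 2) : ℝ) : ℂ) *
        ∫ ξ, Complex.exp (Complex.I * (⟪ξ, x⟫ : ℂ)) * ψ ξ * fourierT (fun y => h y) ξ)) ∧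
    ∀ μ : ℝ → Measure (EuclideanSpace ℝ (Fin d)),
      (∀ s : ℝ, 0 < s → IsProbabilityMeasure (μ s)) →
      (∀ s : ℝ, 0 < s → ∀ ξ : EuclideanSpace ℝ (Fin d),
        ∫ y, Complex.exp (Complex.I * (⟪ξ, y⟫ : ℂ)) ∂(μ s) =
          Complex.exp ((s : ℂ) * ψ ξ)) →
      Filter.Tendsto
        (fun s : ℝ => ((∫ y, h (x + y) ∂(μ s)) - h x) / (s : ℂ))
        (nhdsWithin 0 (Set.Ioi 0))
        (nhds ((((2 * Real.pi) ^ (-(d : ℝ) / 2) : ℝ) : ℂ) *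
          ∫ ξ, Complex.exp (Complex.I * (⟪ξ, x⟫ : ℂ)) * ψ ξ * fourierT (fun y => h y) ξ)) := by
  have hp1 := part1 ψ hψmeas hre C hC hbound h x
  refine ⟨hp1, ?_⟩
  intro μ hprob hchar
  apply hp1.congr'
  filter_upwards [self_mem_nhdsWithin] with s hs
  exact (Tsh ψ hψmeas hre h x (μ s) (hprob s hs) hs (hchar s hs)).symm
end

section
/- Let ψ_1,…,ψ_N : ℝ^d → ℂ be measurable with Re ψ_j(ξ) ≤ 0 for all ξ and j and |ψ_j(ξ)| ≤ C(1 + |ξ|²) for some constant C > 0. Let h : ℝ^d → ℂ be a Schwartz function, and for t ∈ [0,∞)^N and x ∈ ℝ^d set w(t, x) = (2π)^{−d/2} ∫_{ℝ^d} e^{i⟨ξ,x⟩} exp(Σ_{j=1}^N t_j ψ_j(ξ)) ĥ(ξ) dξ. Then w(0, x) = h(x) and, for every i = 1,…,N and every t ∈ [0,∞)^N, the partial derivative of w in the variable t_i (one-sided at t_i = 0) exists and equals ∂w/∂t_i (t, x) = (2π)^{−d/2} ∫_{ℝ^d} e^{i⟨ξ,x⟩} ψ_i(ξ) exp(Σ_{j=1}^N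 t_j ψ_j(ξ)) ĥ(ξ) dξ. (Proposition 2.13 realized for the Feller semigroup of a multiparameter Lévy process: w solves the system ∂w/∂t_i = G_i w, w(0) = h, with G_i the pseudo-differential operator with symbol ψ_i.) -/
open MeasureTheory
open scoped RealInnerProductSpace

/-- The function `w(t,x) = (2π)^{-d/2} ∫ e^{i⟨ξ,x⟩} exp(∑_j t_j ψ_j(ξ)) ĥ(ξ) dξ`. -/
noncomputable def wFun {d N : ℕ} (ψ : Fin N → EuclideanSpace ℝ (Fin d) → ℂ)
    (h : EuclideanSpace ℝ (Fin d) → ℂ) (t : Fin N → ℝ)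
    (x : EuclideanSpace ℝ (Fin d)) : ℂ :=
  (((2 * Real.pi) ^ (-(d : ℝ) / 2) : ℝ) : ℂ) *
    ∫ ξ, Complex.exp (Complex.I * (⟪ξ, x⟫ : ℂ)) *
      Complex.exp (∑ j, (t j : ℂ) * ψ j ξ) * fourierT h ξ

open Complex Real Filter FourierTransform
open scoped Topology

/-- Proposition 2.13 for the Feller semigroup of a multiparameter Lévy process:
`w(t,x)` satisfies `w(0,x) = h(x)` and `∂w/∂t_i = G_i w`, where `G_i` is the
pseudo-differential operator with symbol `ψ_i` (one-sided derivative at `t_i = 0`). -/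
theorem stmt_8 {d N : ℕ}
    (ψ : Fin N → EuclideanSpace ℝ (Fin d) → ℂ)
    (hψmeas : ∀ j, Measurable (ψ j))
    (hre : ∀ j ξ, (ψ j ξ).re ≤ 0)
    (C : ℝ) (hC : 0 < C)
    (hbound : ∀ j ξ, ‖ψ j ξ‖ ≤ C * (1 + ‖ξ‖ ^ 2))
    (h : SchwartzMap (EuclideanSpace ℝ (Fin d)) ℂ) :
    (∀ x, wFun ψ (fun y => h y) 0 x = h x) ∧
    ∀ (i : Fin N) (t : Fin N → ℝ), (∀ j, 0 ≤ t j) → ∀ x,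
      HasDerivWithinAt (fun r : ℝ => wFun ψ (fun y => h y) (Function.update t i r) x)
        ((((2 * Real.pi) ^ (-(d : ℝ) / 2) : ℝ) : ℂ) *
          ∫ ξ, Complex.exp (Complex.I * (⟪ξ, x⟫ : ℂ)) * ψ i ξ *
            Complex.exp (∑ j, (t j : ℂ) * ψ j ξ) * fourierT (fun y => h y) ξ)
        (Set.Ici 0) (t i) := by
  have hpi : (0:ℝ) < 2 * Real.pi := by positivity
  have hne : ((2*Real.pi)⁻¹ : ℝ) ≠ 0 := by positivity
  set c : ℝ := (2 * Real.pi) ^ (-(d:ℝ)/2) with hc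
  -- Identify `fourierT h` with a Schwartz function `G`.
  let e : EuclideanSpace ℝ (Fin d) ≃L[ℝ] EuclideanSpace ℝ (Fin d) :=
    (LinearEquiv.smulOfNeZero ℝ _ _ hne).toContinuousLinearEquiv
  have he : ∀ ξ, e ξ = (2*Real.pi)⁻¹ • ξ := fun ξ => rfl
  let Φ : SchwartzMap (EuclideanSpace ℝ (Fin d)) ℂ := SchwartzMap.fourierTransformCLM ℝ h
  have hΦ : ⇑Φ = 𝓕 (fun y => h y) := by
    simp [Φ, SchwartzMap.fourier_coe]
  let G : SchwartzMap (EuclideanSpace ℝ (Fin d)) ℂ :=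
    c • (SchwartzMap.compCLMOfContinuousLinearEquiv ℝ e Φ)
  have hG : ∀ ξ, G ξ = (c : ℂ) * Φ ((2*Real.pi)⁻¹ • ξ) := by
    intro ξ
    have h' : e ξ = (2*Real.pi)⁻¹ • ξ := he ξ
    simp only [G, SchwartzMap.smul_apply, SchwartzMap.compCLMOfContinuousLinearEquiv_apply,
      Function.comp_apply, h']
    simp [Complex.real_smul]
  have key : ∀ ξ, fourierT (fun y => h y) ξ = G ξ := by
    intro ξ
    rw [hG, hΦ, fourierT]
    congr 1
    rw [Real.fourier_eq']
    congr 1 with v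
    rw [real_inner_smul_right, real_inner_comm]
    have h3 : -2 * Real.pi * ((2*Real.pi)⁻¹ * (⟪v,ξ⟫ : ℝ)) = -⟪v,ξ⟫ := by
      field_simp
    rw [h3, smul_eq_mul]
    congr 1
    push_cast
    ring
  -- Part 1: inversion formula.
  have part1 : ∀ x, wFun ψ (fun y => h y) 0 x = h x := by
    intro x
    have h0 : wFun ψ (fun y => h y) 0 x
        = (c:ℂ) * ∫ ξ, Complex.exp (Complex.I * (⟪ξ, x⟫ : ℂ)) * G ξ := by
      rw [wFun]
      congr 1
      refine integral_congr_ae (ae_of_all _ fun ξ => ?_)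
      simp only [key]
      simp
    rw [h0]
    have h1 : ∀ ξ, Complex.exp (Complex.I * (⟪ξ, x⟫ : ℂ)) * G ξ
        = (c:ℂ) * (Complex.exp (Complex.I * (⟪ξ, x⟫ : ℂ)) * Φ ((2*Real.pi)⁻¹ • ξ)) := by
      intro ξ; rw [hG]; ring
    simp only [h1]
    rw [integral_const_mul]
    set f : EuclideanSpace ℝ (Fin d) → ℂ :=
      fun ξ => Complex.exp (Complex.I * (⟪ξ, x⟫ : ℂ)) * Φ ((2*Real.pi)⁻¹ • ξ) with hf
    have hcomp := MeasureTheory.Measure.integral_comp_smul_of_nonneg (volume) f (2*Real.pi)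
      (hR := hpi.le)
    have hd : Module.finrank ℝ (EuclideanSpace ℝ (Fin d)) = d := finrank_euclideanSpace_fin
    rw [hd] at hcomp
    have h2 : ∀ η, f ((2*Real.pi) • η)
        = Complex.exp ((↑(2 * Real.pi * ⟪η, x⟫) : ℂ) * Complex.I) • Φ η := by
      intro η
      rw [hf]
      simp only [smul_smul]
      rw [inv_mul_cancel₀ hpi.ne', one_smul, real_inner_smul_left, smul_eq_mul]
      push_cast
      ring_nf
    have h3 : ∫ η, f ((2*Real.pi) • η) = 𝓕⁻ (⇑Φ) x := by
      rw [Real.fourierInv_eq']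
      exact integral_congr_ae (Filter.Eventually.of_forall h2)
    have hinv : 𝓕⁻ (⇑Φ) x = h x := by
      rw [hΦ, (h.continuous.fourierInv_fourier_eq h.integrable (by rw [← hΦ]; exact Φ.integrable))]
    rw [hcomp] at h3
    rw [hinv] at h3
    have h4 : ∫ ξ, f ξ = ((2*Real.pi)^d : ℝ) • h x := by
      rw [← h3, smul_smul]
      rw [mul_inv_cancel₀ (by positivity), one_smul]
    rw [h4, Complex.real_smul, ← mul_assoc, ← mul_assoc]
    have hr : (c * c * (2*Real.pi)^d : ℝ) = 1 := by
      rw [hc, ← Real.rpow_add hpi, ← Real.rpow_natCast (2*Real.pi) d, ← Real.rpow_add hpi]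
      norm_num
    have h5 : (c:ℂ) * (c:ℂ) * (((2*Real.pi)^d : ℝ):ℂ) = 1 := by exact_mod_cast hr
    rw [h5, one_mul]
  refine ⟨part1, ?_⟩
  -- Part 2: differentiation under the integral sign.
  intro i t ht x
  set t₀ : ℝ := t i with ht₀
  set A : EuclideanSpace ℝ (Fin d) → ℂ :=
    fun ξ => Complex.exp (Complex.I * (⟪ξ, x⟫ : ℂ)) with hA
  set S : ℝ → EuclideanSpace ℝ (Fin d) → ℂ :=
    fun r ξ => ∑ j, ((Function.update t i r j : ℝ) : ℂ) * ψ j ξ with hS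
  set F : ℝ → EuclideanSpace ℝ (Fin d) → ℂ := fun r ξ => A ξ * Complex.exp (S r ξ) * G ξ with hF
  set B : EuclideanSpace ℝ (Fin d) → ℂ :=
    fun ξ => ∑ j ∈ Finset.univ.erase i, ((t j : ℝ) : ℂ) * ψ j ξ with hB
  have hSsum : ∀ r ξ, S r ξ = (r:ℂ) * ψ i ξ + B ξ := by
    intro r ξ
    rw [hS]
    simp only
    rw [← Finset.add_sum_erase _ _ (Finset.mem_univ i)]
    congr 1
    · simp
    · exact Finset.sum_congr rfl fun j hj => by
        rw [Function.update_of_ne (Finset.ne_of_mem_erase hj)]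
  have hupd : ∀ r, 0 ≤ r → ∀ j, 0 ≤ Function.update t i r j := by
    intro r hr j
    rcases eq_or_ne j i with rfl | hj
    · simpa using hr
    · rw [Function.update_of_ne hj]; exact ht j
  have hSre : ∀ r, 0 ≤ r → ∀ ξ : EuclideanSpace ℝ (Fin d), (S r ξ).re ≤ 0 := by
    intro r hr ξ
    rw [hS]
    simp only
    rw [Complex.re_sum]
    refine Finset.sum_nonpos fun j _ => ?_
    rw [Complex.re_ofReal_mul]
    exact mul_nonpos_of_nonneg_of_nonpos (hupd r hr j) (hre j ξ)
  have hA1 : ∀ ξ : EuclideanSpace ℝ (Fin d), ‖A ξ‖ = 1 := by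
    intro ξ; rw [hA]; simp [Complex.norm_exp]
  have hexp1 : ∀ z : ℂ, z.re ≤ 0 → ‖Complex.exp z‖ ≤ 1 := by
    intro z hz
    rw [Complex.norm_exp]
    exact Real.exp_le_one_iff.mpr hz
  have hnormF : ∀ r, 0 ≤ r → ∀ ξ : EuclideanSpace ℝ (Fin d), ‖F r ξ‖ ≤ ‖G ξ‖ := by
    intro r hr ξ
    rw [hF]
    simp only [norm_mul, hA1, one_mul]
    calc ‖Complex.exp (S r ξ)‖ * ‖G ξ‖ ≤ 1 * ‖G ξ‖ := by
          gcongr; exact hexp1 _ (hSre r hr ξ)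
      _ = ‖G ξ‖ := one_mul _
  have hmeasF : ∀ r, AEStronglyMeasurable (F r) volume := by
    intro r
    have m1 : Continuous A := by
      rw [hA]
      exact Complex.continuous_exp.comp
        (continuous_const.mul (Complex.continuous_ofReal.comp
          (continuous_id.inner continuous_const)))
    have m2 : Measurable fun ξ => Complex.exp (S r ξ) :=
      Complex.measurable_exp.comp (Finset.measurable_sum _ fun j _ =>
        (measurable_const.mul (hψmeas j)))
    exact (((m1.measurable.mul m2).mul G.continuous.measurable)).aestronglyMeasurable
  have hFint : ∀ r, 0 ≤ r → Integrable (F r) := fun r hr =>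
    G.integrable.norm.mono' (hmeasF r) (ae_of_all _ (hnormF r hr))
  have hDiff : ∀ (ξ : EuclideanSpace ℝ (Fin d)) (r₀ : ℝ), HasDerivAt (fun r => F r ξ)
      (A ξ * (ψ i ξ * Complex.exp (S r₀ ξ)) * G ξ) r₀ := by
    intro ξ r₀
    have h1 : HasDerivAt (fun z : ℂ => Complex.exp (z * ψ i ξ + B ξ))
        (Complex.exp ((r₀:ℂ) * ψ i ξ + B ξ) * ψ i ξ) (r₀:ℂ) := by
      simpa using (((hasDerivAt_id ((r₀:ℂ))).mul_const (ψ i ξ)).add_const (B ξ)).cexp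
    have h2 : HasDerivAt (fun r : ℝ => Complex.exp ((r:ℂ) * ψ i ξ + B ξ))
        (Complex.exp ((r₀:ℂ) * ψ i ξ + B ξ) * ψ i ξ) r₀ := h1.comp_ofReal
    have h3 : HasDerivAt (fun r : ℝ => A ξ * Complex.exp ((r:ℂ) * ψ i ξ + B ξ) * G ξ)
        (A ξ * (Complex.exp ((r₀:ℂ) * ψ i ξ + B ξ) * ψ i ξ) * G ξ) r₀ :=
      (h2.const_mul (A ξ)).mul_const (G ξ)
    have heq : (fun r : ℝ => F r ξ)
        = fun r : ℝ => A ξ * Complex.exp ((r:ℂ) * ψ i ξ + B ξ) * G ξ := by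
      funext r; rw [hF]; simp only [hSsum r ξ]
    rw [heq, hSsum r₀ ξ]
    convert h3 using 1
    ring
  have hexpdiff : ∀ (r r' : ℝ), 0 ≤ r → 0 ≤ r' → ∀ ξ : EuclideanSpace ℝ (Fin d),
      ‖Complex.exp (S r ξ) - Complex.exp (S r' ξ)‖ ≤ |r - r'| * ‖ψ i ξ‖ := by
    intro r r' hr hr' ξ
    have hconv : Convex ℝ {z : ℂ | z.re ≤ 0} := convex_halfSpace_re_le 0
    have hd : ∀ z ∈ {z : ℂ | z.re ≤ 0}, HasDerivWithinAt Complex.exp (Complex.exp z)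
        {z : ℂ | z.re ≤ 0} z := fun z _ => (Complex.hasDerivAt_exp z).hasDerivWithinAt
    have hb : ∀ z ∈ {z : ℂ | z.re ≤ 0}, ‖Complex.exp z‖ ≤ 1 := fun z hz => hexp1 z hz
    have key' := hconv.norm_image_sub_le_of_norm_hasDerivWithin_le hd hb
      (hSre r' hr' ξ) (hSre r hr ξ)
    have hsub : S r ξ - S r' ξ = ((r:ℂ) - (r':ℂ)) * ψ i ξ := by
      rw [hSsum, hSsum]; ring
    calc ‖Complex.exp (S r ξ) - Complex.exp (S r' ξ)‖ ≤ 1 * ‖S r ξ - S r' ξ‖ := key'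
      _ = |r - r'| * ‖ψ i ξ‖ := by
          rw [one_mul, hsub, norm_mul, ← Complex.ofReal_sub, Complex.norm_real,
            Real.norm_eq_abs]
  set D : EuclideanSpace ℝ (Fin d) → ℂ :=
    fun ξ => A ξ * (ψ i ξ * Complex.exp (S t₀ ξ)) * G ξ with hD
  have hcongr_target : (∫ ξ, Complex.exp (Complex.I * (⟪ξ, x⟫ : ℂ)) * ψ i ξ *
      Complex.exp (∑ j, (t j : ℂ) * ψ j ξ) * fourierT (fun y => h y) ξ) = ∫ ξ, D ξ := by
    refine integral_congr_ae (ae_of_all _ fun ξ => ?_)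
    simp only [key, hD, hA, hS]
    simp only [ht₀, Function.update_eq_self]
    ring
  have hwfun : (fun r : ℝ => wFun ψ (fun y => h y) (Function.update t i r) x)
      = fun r : ℝ => (c:ℂ) * ∫ ξ, F r ξ := by
    funext r
    rw [wFun]
    congr 1
    refine integral_congr_ae (ae_of_all _ fun ξ => ?_)
    simp only [key, hF, hA, hS]
  rw [hwfun, hcongr_target]
  rw [hasDerivWithinAt_iff_tendsto_slope]
  set l : Filter ℝ := 𝓝[Set.Ici (0:ℝ) \ {t₀}] t₀ with hl
  have hmain : Tendsto (fun r => ∫ ξ, (r - t₀)⁻¹ • (F r ξ - F t₀ ξ)) l (𝓝 (∫ ξ, D ξ)) := by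
    apply tendsto_integral_filter_of_dominated_convergence
      (fun ξ => C * ((1 + ‖ξ‖^2) * ‖G ξ‖))
    · exact Eventually.of_forall fun r =>
        (((hmeasF r).sub (hmeasF t₀)).const_smul (r - t₀)⁻¹)
    · filter_upwards [self_mem_nhdsWithin] with r hr
      refine ae_of_all _ fun ξ => ?_
      obtain ⟨hr0, hrne⟩ := hr
      have hrne' : r - t₀ ≠ 0 := sub_ne_zero.mpr (by simpa using hrne)
      have hFsub : F r ξ - F t₀ ξ
          = A ξ * (Complex.exp (S r ξ) - Complex.exp (S t₀ ξ)) * G ξ := by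
        rw [hF]; ring
      rw [norm_smul, hFsub]
      simp only [norm_mul, hA1, one_mul, norm_inv, Real.norm_eq_abs]
      calc |r - t₀|⁻¹ * (‖Complex.exp (S r ξ) - Complex.exp (S t₀ ξ)‖ * ‖G ξ‖)
          ≤ |r - t₀|⁻¹ * ((|r - t₀| * ‖ψ i ξ‖) * ‖G ξ‖) :=
            mul_le_mul_of_nonneg_left
              (mul_le_mul_of_nonneg_right (hexpdiff r t₀ hr0 (ht i) ξ) (norm_nonneg _))
              (inv_nonneg.mpr (abs_nonneg _))
        _ = (|r - t₀|⁻¹ * |r - t₀|) * (‖ψ i ξ‖ * ‖G ξ‖) := by ring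
        _ = ‖ψ i ξ‖ * ‖G ξ‖ := by
            rw [inv_mul_cancel₀ (abs_ne_zero.mpr hrne'), one_mul]
        _ ≤ (C * (1 + ‖ξ‖^2)) * ‖G ξ‖ := by
            gcongr; exact hbound i ξ
        _ = C * ((1 + ‖ξ‖^2) * ‖G ξ‖) := by ring
    · have h1 : Integrable (fun ξ => (1 + ‖ξ‖^2) * ‖G ξ‖) := by
        have ha := (G.integrable (μ := volume)).norm
        have hb := G.integrable_pow_mul volume 2
        refine (ha.add hb).congr (ae_of_all _ fun ξ => ?_)
        simp only [Pi.add_apply]; ring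
      exact h1.const_mul C
    · refine ae_of_all _ fun ξ => ?_
      have hda := hasDerivAt_iff_tendsto_slope.mp (hDiff ξ t₀)
      have hmono : l ≤ 𝓝[≠] t₀ :=
        nhdsWithin_mono _ fun y hy => hy.2
      have htend := hda.mono_left hmono
      refine htend.congr fun r => ?_
      rw [slope_def_module]
  have hslope_eq : ∀ᶠ r in l,
      slope (fun r : ℝ => (c:ℂ) * ∫ ξ, F r ξ) t₀ r
      = (c:ℂ) * ∫ ξ, (r - t₀)⁻¹ • (F r ξ - F t₀ ξ) := by
    filter_upwards [self_mem_nhdsWithin] with r hr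
    obtain ⟨hr0, hrne⟩ := hr
    rw [slope_def_module, ← mul_sub, ← integral_sub (hFint r hr0) (hFint t₀ (ht i)),
      integral_smul, Complex.real_smul, Complex.real_smul]
    ring
  exact Filter.Tendsto.congr' (hslope_eq.mono fun r hr => hr.symm) (hmain.const_mul (c:ℂ))
end
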